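/- arXiv:2006.14446 — 4 statements merged into one kernel-verified Lean document; each statement's English description precedes it below -/
import Mathlib

section
/- Let G be a locally compact group with left Haar measure μ_G and a proper, integer-valued length function 𝓛, with C^G_n := {g : 𝓛(g)=n}. Let G act measurably on a space B with quasi-invariant probability measure ν and Radon–Nikodym cocycle c(g,b) := (d((g⁻¹)_*ν)/dν)(b) satisfying the cocycle identity c(g₁g₂,b) = c(g₁,g₂b)·c(g₂,b), and set Ξ(g) := ∫_B c(g⁻¹,b)^{1/2} dν(b). Suppose the subgroup G₀ := {g : 𝓛(g)=0} is compact, acts transitively on B, and leaves ν invariant, and assume c is continuous on G × B for B a compact Hausdorff space with continuous G-action. Then for every n with 0 < μ_G(C^G_n) < ∞ and every b ∈ B: (1/μ_G(C^G_n)) ∫_{C^G_n} c(g⁻¹,b)^{1/2}/Ξ(g) dμ_G(g) = 1, i.e. the function M^G_n 1_B is constant equal to 1. -/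
open MeasureTheory
open scoped ENNReal

namespace Stmt9

def IsLengthFun {G : Type*} [Group G] (L : G → ℝ) : Prop :=
  L 1 = 0 ∧ (∀ g, 0 ≤ L g) ∧ (∀ g, L g⁻¹ = L g) ∧ ∀ g h, L (g * h) ≤ L g + L h

end Stmt9

/-- **The continuous Koopman mean applied to `1_B` is constant equal to `1`.**
`G` is a locally compact group with left Haar measure `μG` and a proper
integer-valued length function `𝓛`; `B` is a compact Hausdorff space with
continuous `G`-action, `ν` a quasi-invariant Borel probability measure with
continuous positive cocycle `c` satisfying the cocycle identity, and
`Ξ(g) = ∫_B c(g⁻¹,b)^{1/2} dν`. If the subgroup `G₀ = {𝓛 = 0}` is compact,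
acts transitively on `B` and leaves `ν` invariant, then for every `n` with
`0 < μG(C^G_n) < ∞` and every `b ∈ B`,
`(1/μG(C^G_n)) ∫_{C^G_n} c(g⁻¹,b)^{1/2}/Ξ(g) dμG = 1`. -/
theorem statement9
    {G : Type*} [Group G] [TopologicalSpace G] [IsTopologicalGroup G]
    [LocallyCompactSpace G] [MeasurableSpace G] [BorelSpace G]
    (μG : Measure G) [μG.IsHaarMeasure]
    (𝓛 : G → ℝ) (hlen : Stmt9.IsLengthFun 𝓛)
    (hint : ∀ g : G, ∃ n : ℕ, 𝓛 g = n)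
    (hproper : ∀ t : ℝ, IsCompact {g : G | 𝓛 g ≤ t})
    {B : Type*} [TopologicalSpace B] [CompactSpace B] [T2Space B]
    [MeasurableSpace B] [BorelSpace B]
    (ν : Measure B) [IsProbabilityMeasure ν]
    [MulAction G B] (hact : Continuous fun p : G × B => p.1 • p.2)
    (hqinv : ∀ g : G, ν.map (fun b : B => g • b) ≪ ν)
    (c : G → B → ℝ) (hc_pos : ∀ g b, 0 < c g b)
    (hc_cont : Continuous fun p : G × B => c p.1 p.2)
    (hc_rn : ∀ g : G,
      (fun b => ENNReal.ofReal (c g b)) =ᵐ[ν] (ν.map (fun b : B => g⁻¹ • b)).rnDeriv ν)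
    (hc_cocycle : ∀ g₁ g₂ : G, ∀ b : B, c (g₁ * g₂) b = c g₁ (g₂ • b) * c g₂ b)
    (Ξ : G → ℝ) (hΞ : ∀ g : G, Ξ g = ∫ b, Real.sqrt (c g⁻¹ b) ∂ν)
    (hG0_compact : IsCompact {g : G | 𝓛 g = 0})
    (hG0_trans : ∀ b b' : B, ∃ g : G, 𝓛 g = 0 ∧ g • b = b')
    (hG0_inv : ∀ g : G, 𝓛 g = 0 → ν.map (fun b : B => g • b) = ν) :
    ∀ n : ℕ, 0 < μG {g : G | 𝓛 g = n} → μG {g : G | 𝓛 g = n} < ⊤ →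
      ∀ b : B,
        ∫ g in {g : G | 𝓛 g = n}, Real.sqrt (c g⁻¹ b) / Ξ g ∂μG =
          (μG {g : G | 𝓛 g = n}).toReal := by
  classical
  obtain ⟨hL1, hLnn, hLinv, hLtri⟩ := hlen
  -- basic facts about the length function
  have hLinv0 : ∀ {k : G}, 𝓛 k = 0 → 𝓛 k⁻¹ = 0 := fun {k} hk => by rw [hLinv]; exact hk
  have hLmul : ∀ {k : G}, 𝓛 k = 0 → ∀ g, 𝓛 (k * g) = 𝓛 g := by
    intro k hk g
    have h1 : 𝓛 (k * g) ≤ 𝓛 g := by have := hLtri k g; rw [hk] at this; linarith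
    have h2 : 𝓛 g ≤ 𝓛 (k * g) := by
      have := hLtri k⁻¹ (k * g)
      rw [hLinv0 hk, ← mul_assoc, inv_mul_cancel, one_mul] at this
      linarith
    linarith
  -- the action of a fixed group element is continuous
  have hcontk : ∀ k : G, Continuous fun b : B => k • b := fun k =>
    hact.comp (continuous_const.prodMk continuous_id)
  -- ν gives positive mass to nonempty open sets
  have hν_open : ∀ U : Set B, IsOpen U → U.Nonempty → ν U ≠ 0 := by
    rintro U hU ⟨u, hu⟩ h0
    have hopen : ∀ k : {k : G // 𝓛 k = 0}, IsOpen ((fun b => (k : G) • b) '' U) := by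
      intro k
      have himg : (fun b => (k : G) • b) '' U = (fun b => ((k : G)⁻¹ : G) • b) ⁻¹' U := by
        ext x
        constructor
        · rintro ⟨y, hy, rfl⟩; simpa [inv_smul_smul] using hy
        · intro hx; exact ⟨_, hx, by simp [smul_inv_smul]⟩
      rw [himg]; exact hU.preimage (hcontk _)
    have hcover : (Set.univ : Set B) ⊆
        ⋃ k : {k : G // 𝓛 k = 0}, (fun b => (k : G) • b) '' U := by
      intro b' _
      obtain ⟨k, hk, hkb⟩ := hG0_trans u b'
      exact Set.mem_iUnion.2 ⟨⟨k, hk⟩, ⟨u, hu, hkb⟩⟩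
    obtain ⟨t, ht⟩ := isCompact_univ.elim_finite_subcover _ hopen hcover
    have hz : ∀ k : {k : G // 𝓛 k = 0}, ν ((fun b => (k : G) • b) '' U) = 0 := by
      intro k
      have hinvk := hG0_inv k k.2
      have : ν ((fun b => (k : G) • b) '' U) = ν U := by
        conv_lhs => rw [← hinvk]
        rw [Measure.map_apply (hcontk (k : G)).measurable ((hopen k).measurableSet),
          Set.preimage_image_eq U (MulAction.injective (k : G))]
      rw [this, h0]
    have hν0 : ν (Set.univ : Set B) = 0 := by
      refine le_antisymm ?_ (zero_le)
      calc ν Set.univ ≤ ν (⋃ k ∈ t, (fun b => (k : G) • b) '' U) := measure_mono ht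
        _ ≤ ∑ k ∈ t, ν ((fun b => (k : G) • b) '' U) := measure_biUnion_finset_le t _
        _ = 0 := by simp [hz]
    simp [measure_univ] at hν0
  -- the cocycle is trivial on G₀
  have hc_one : ∀ k : G, 𝓛 k = 0 → ∀ b : B, c k b = 1 := by
    intro k hk
    have hae : ∀ᵐ b' ∂ν, c k b' = 1 := by
      have h1 := hc_rn k
      rw [hG0_inv k⁻¹ (hLinv0 hk)] at h1
      filter_upwards [h1.trans (Measure.rnDeriv_self ν)] with b' hb'
      exact ENNReal.ofReal_eq_one.1 hb'
    by_contra hcon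
    push_neg at hcon
    obtain ⟨b', hb'⟩ := hcon
    have hUopen : IsOpen {x : B | c k x ≠ 1} :=
      isOpen_compl_singleton.preimage (hc_cont.comp (continuous_const.prodMk continuous_id))
    have hUnull : ν {x : B | c k x ≠ 1} = 0 := ae_iff.mp hae
    exact hν_open _ hUopen ⟨b', hb'⟩ hUnull
  haveI : μG.IsMulLeftInvariant := inferInstance
  intro n hpos hfin b
  set Cn : Set G := {g : G | 𝓛 g = (n : ℝ)} with hCn
  set ρ : Measure G := μG.restrict Cn with hρ
  have hρuniv : ρ Set.univ = μG Cn := Measure.restrict_apply_univ Cn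
  haveI : IsFiniteMeasure ρ := ⟨by rw [hρuniv]; exact hfin⟩
  -- a compact measurable set containing Cn
  set K : Set G := closure {g : G | 𝓛 g ≤ (n : ℝ)} with hKdef
  have hKcomp : IsCompact K := (hproper n).closure
  have hKmeas : MeasurableSet K := isClosed_closure.measurableSet
  have hCnK : Cn ⊆ K := fun g hg => subset_closure (le_of_eq hg)
  have h1K : (1 : G) ∈ K := subset_closure (by simp [hL1])
  have hρK : ρ Kᶜ = 0 := by
    rw [hρ, Measure.restrict_apply hKmeas.compl]
    exact measure_mono_null (fun g hg => (hg.1 (hCnK hg.2)).elim) measure_empty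
  -- ρ is invariant under left translation by G₀
  have hρinv : ∀ k : G, 𝓛 k = 0 → ρ.map (fun h : G => k * h) = ρ := by
    intro k hk
    have hCninv : ∀ h : G, (k * h ∈ Cn) ↔ h ∈ Cn := by
      intro h; simp only [hCn, Set.mem_setOf_eq, hLmul hk h]
    set e : G ≃ᵐ G := (Homeomorph.mulLeft k).toMeasurableEquiv with he
    have hcoe : (fun h : G => k * h) = ⇑e := rfl
    rw [hcoe]
    refine Measure.ext fun A hA => ?_
    rw [e.map_apply A, hρ, Measure.restrict_apply (e.measurable hA), Measure.restrict_apply hA]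
    have hpre : ⇑e ⁻¹' A ∩ Cn = ⇑e ⁻¹' (A ∩ Cn) := by
      rw [Set.preimage_inter]
      congr 1
      ext h
      exact (hCninv h).symm
    rw [hpre, ← e.map_apply (A ∩ Cn), ← hcoe, MeasureTheory.map_mul_left_eq_self μG k]
  -- per-element integrability and positivity of Ξ
  have hcontq : ∀ g : G, Continuous fun b' : B => Real.sqrt (c g⁻¹ b') := fun g =>
    Real.continuous_sqrt.comp (hc_cont.comp (continuous_const.prodMk continuous_id))
  have hint_g : ∀ g : G, Integrable (fun b' => Real.sqrt (c g⁻¹ b')) ν := by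
    intro g
    obtain ⟨bM, -, hbM⟩ := isCompact_univ.exists_isMaxOn ⟨b, trivial⟩ (hcontq g).continuousOn
    rw [isMaxOn_iff] at hbM
    refine Integrable.mono' (integrable_const (Real.sqrt (c g⁻¹ bM)))
      (hcontq g).aestronglyMeasurable (Filter.Eventually.of_forall fun b' => ?_)
    rw [Real.norm_eq_abs, abs_of_nonneg (Real.sqrt_nonneg _)]
    exact hbM b' trivial
  have hΞpos : ∀ g : G, 0 < Ξ g := by
    intro g
    obtain ⟨b₀, -, hb₀⟩ := isCompact_univ.exists_isMinOn ⟨b, trivial⟩ (hcontq g).continuousOn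
    rw [isMinOn_iff] at hb₀
    have hδ : 0 < Real.sqrt (c g⁻¹ b₀) := Real.sqrt_pos.2 (hc_pos _ _)
    have hle : Real.sqrt (c g⁻¹ b₀) ≤ Ξ g := by
      rw [hΞ g]
      calc Real.sqrt (c g⁻¹ b₀) = ∫ _b' : B, Real.sqrt (c g⁻¹ b₀) ∂ν := by
            simp [measure_univ]
        _ ≤ ∫ b', Real.sqrt (c g⁻¹ b') ∂ν :=
            integral_mono (integrable_const _) (hint_g g) fun b' => hb₀ b' trivial
    linarith
  -- invariance of Ξ under left translation by G₀
  have hΞinv : ∀ k : G, 𝓛 k = 0 → ∀ h : G, Ξ (k * h) = Ξ h := by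
    intro k hk h
    rw [hΞ, hΞ]
    have hstep : ∀ b' : B, Real.sqrt (c (k * h)⁻¹ b') = Real.sqrt (c h⁻¹ (k⁻¹ • b')) := by
      intro b'
      rw [mul_inv_rev, hc_cocycle h⁻¹ k⁻¹ b', hc_one k⁻¹ (hLinv0 hk) b', mul_one]
    simp_rw [hstep]
    have hmapν := hG0_inv k⁻¹ (hLinv0 hk)
    have hmi : ∫ b'', Real.sqrt (c h⁻¹ b'') ∂(ν.map fun b' : B => k⁻¹ • b')
        = ∫ b', Real.sqrt (c h⁻¹ (k⁻¹ • b')) ∂ν := by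
      refine integral_map (hcontk k⁻¹).aemeasurable ?_
      rw [hmapν]
      exact (hcontq h).aestronglyMeasurable
    rw [← hmi, hmapν]
  -- the cocycle identity under left translation by G₀
  have hcinv : ∀ k : G, 𝓛 k = 0 → ∀ (h : G) (b' : B), c (k * h)⁻¹ (k • b') = c h⁻¹ b' := by
    intro k hk h b'
    rw [mul_inv_rev, hc_cocycle h⁻¹ k⁻¹ (k • b'), hc_one k⁻¹ (hLinv0 hk), mul_one, inv_smul_smul]
  -- the averaged function
  set F : B → ℝ := fun b' => ∫ g, Real.sqrt (c g⁻¹ b') / Ξ g ∂ρ with hF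
  have hFinv : ∀ k : G, 𝓛 k = 0 → ∀ b' : B, F (k • b') = F b' := by
    intro k hk b'
    set e : G ≃ᵐ G := (Homeomorph.mulLeft k).toMeasurableEquiv with he
    have hcoe : (fun h : G => k * h) = ⇑e := rfl
    have hmapρ : ρ.map ⇑e = ρ := by rw [← hcoe]; exact hρinv k hk
    calc F (k • b') = ∫ g, Real.sqrt (c g⁻¹ (k • b')) / Ξ g ∂(ρ.map ⇑e) := by rw [hmapρ]
      _ = ∫ h, Real.sqrt (c (e h)⁻¹ (k • b')) / Ξ (e h) ∂ρ := integral_map_equiv e _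
      _ = F b' := by
          refine integral_congr_ae (Filter.Eventually.of_forall fun h => ?_)
          show Real.sqrt (c (k * h)⁻¹ (k • b')) / Ξ (k * h) = _
          rw [hcinv k hk h b', hΞinv k hk h]
  have hFconst : ∀ b' : B, F b' = F b := by
    intro b'
    obtain ⟨k, hk, hkb⟩ := hG0_trans b b'
    rw [← hkb]; exact hFinv k hk b
  -- a strongly measurable substitute for the integrand on the product space
  have hqcont : Continuous fun p : G × B => Real.sqrt (c p.1⁻¹ p.2) :=
    Real.continuous_sqrt.comp
      (hc_cont.comp ((continuous_inv.comp continuous_fst).prodMk continuous_snd))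
  set q : C(G × B, ℝ) := ⟨fun p => Real.sqrt (c p.1⁻¹ p.2), hqcont⟩ with hq
  set Φ : C(G, C(B, ℝ)) := q.curry with hΦ
  borelize C(B, ℝ)
  set ψ : G → C(B, ℝ) := K.piecewise ⇑Φ (fun _ => Φ 1) with hψ
  have hψK : ∀ g ∈ K, ψ g = Φ g := fun g hg => Set.piecewise_eq_of_mem _ _ _ hg
  have hψmeas : Measurable ψ :=
    Measurable.piecewise hKmeas Φ.continuous.measurable measurable_const
  set T : Set C(B, ℝ) := ⇑Φ '' K ∪ {Φ 1} with hT
  have hTcomp : IsCompact T := (hKcomp.image Φ.continuous).union isCompact_singleton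
  have hmemT : ∀ g : G, ψ g ∈ T := by
    intro g
    by_cases hg : g ∈ K
    · exact Or.inl ⟨g, hg, (hψK g hg).symm⟩
    · right
      rw [hψ, Set.piecewise_eq_of_notMem _ _ _ hg]
      rfl
  haveI : SecondCountableTopology ↥T := by
    haveI : TopologicalSpace.SeparableSpace ↥T := hTcomp.isSeparable.separableSpace
    exact UniformSpace.secondCountable_of_separable ↥T
  have hevalcont : Continuous fun p : ↥T × B => (p.1 : C(B, ℝ)) p.2 :=
    (continuous_subtype_val.comp continuous_fst).eval continuous_snd
  have hH'meas : Measurable fun p : G × B => ψ p.1 p.2 := by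
    have hθ : Measurable fun p : G × B => ((⟨ψ p.1, hmemT p.1⟩ : ↥T), p.2) :=
      ((hψmeas.comp measurable_fst).subtype_mk).prodMk measurable_snd
    exact hevalcont.measurable.comp hθ
  have hH'sm : StronglyMeasurable fun p : G × B => ψ p.1 p.2 := hH'meas.stronglyMeasurable
  set Ξ' : G → ℝ := fun g => ∫ b', ψ g b' ∂ν with hΞ'
  have hΞ'sm : StronglyMeasurable Ξ' := hH'sm.integral_prod_right'
  have hψapply : ∀ g ∈ K, ∀ b' : B, ψ g b' = Real.sqrt (c g⁻¹ b') := by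
    intro g hg b'
    rw [hψK g hg, hΦ, ContinuousMap.curry_apply]
    rfl
  have hΞ'K : ∀ g ∈ K, Ξ' g = Ξ g := by
    intro g hg
    rw [hΞ', hΞ g]
    simp only
    refine integral_congr_ae (Filter.Eventually.of_forall fun b' => ?_)
    exact hψapply g hg b'
  set Hsm : G × B → ℝ := fun p => ψ p.1 p.2 / Ξ' p.1 with hHsm_def
  have hHsm : StronglyMeasurable Hsm :=
    (hH'meas.div (hΞ'sm.measurable.comp measurable_fst)).stronglyMeasurable
  -- uniform bounds on K
  obtain ⟨pM, -, hpM⟩ := (hKcomp.prod isCompact_univ).exists_isMaxOn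
    ⟨(1, b), ⟨h1K, trivial⟩⟩ hqcont.continuousOn
  rw [isMaxOn_iff] at hpM
  obtain ⟨pδ, hpδmem, hpδ⟩ := (hKcomp.prod isCompact_univ).exists_isMinOn
    ⟨(1, b), ⟨h1K, trivial⟩⟩ hqcont.continuousOn
  rw [isMinOn_iff] at hpδ
  set M : ℝ := Real.sqrt (c pM.1⁻¹ pM.2) with hM
  set δ : ℝ := Real.sqrt (c pδ.1⁻¹ pδ.2) with hδ
  have hδpos : 0 < δ := Real.sqrt_pos.2 (hc_pos _ _)
  have hΞlb : ∀ g ∈ K, δ ≤ Ξ g := by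
    intro g hg
    rw [hΞ g]
    calc δ = ∫ _b' : B, δ ∂ν := by simp [measure_univ]
      _ ≤ ∫ b', Real.sqrt (c g⁻¹ b') ∂ν :=
          integral_mono (integrable_const _) (hint_g g) fun b' => hpδ (g, b') ⟨hg, trivial⟩
  have hratio : ∀ g ∈ K, ∀ b' : B, ‖Real.sqrt (c g⁻¹ b') / Ξ g‖ ≤ M / δ := by
    intro g hg b'
    rw [Real.norm_eq_abs, abs_div, abs_of_nonneg (Real.sqrt_nonneg _),
      abs_of_pos (hΞpos g)]
    exact div_le_div₀ (le_trans (Real.sqrt_nonneg _) (hpM (g, b') ⟨hg, trivial⟩))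
      (hpM (g, b') ⟨hg, trivial⟩) hδpos (hΞlb g hg)
  -- integrability on the product
  set ρν : Measure (G × B) := ρ.prod ν with hρν
  have hae : ∀ᵐ p ∂ρν, p.1 ∈ K := by
    rw [ae_iff]
    have hset : {p : G × B | ¬p.1 ∈ K} = Kᶜ ×ˢ (Set.univ : Set B) := by
      ext p; simp [Set.mem_prod]
    rw [hset, hρν, Measure.prod_prod, hρK, zero_mul]
  have hHeq : (fun p : G × B => Real.sqrt (c p.1⁻¹ p.2) / Ξ p.1) =ᵐ[ρν] Hsm := by
    filter_upwards [hae] with p hp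
    rw [hHsm_def]
    simp only
    rw [hψapply p.1 hp p.2, hΞ'K p.1 hp]
  have hInt : Integrable (fun p : G × B => Real.sqrt (c p.1⁻¹ p.2) / Ξ p.1) ρν := by
    refine Integrable.mono' (integrable_const (M / δ))
      (hHsm.aestronglyMeasurable.congr hHeq.symm) ?_
    filter_upwards [hae] with p hp
    exact hratio p.1 hp p.2
  -- Fubini
  have hswap : ∫ g, ∫ b', Real.sqrt (c g⁻¹ b') / Ξ g ∂ν ∂ρ = ∫ b', F b' ∂ν :=
    integral_integral_swap hInt
  have hinner : ∀ g : G, ∫ b', Real.sqrt (c g⁻¹ b') / Ξ g ∂ν = 1 := by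
    intro g
    rw [integral_div, ← hΞ g, div_self (hΞpos g).ne']
  have hmain : ∫ b', F b' ∂ν = (ρ Set.univ).toReal := by
    rw [← hswap]
    calc ∫ g, ∫ b', Real.sqrt (c g⁻¹ b') / Ξ g ∂ν ∂ρ = ∫ _g, (1 : ℝ) ∂ρ :=
          integral_congr_ae (Filter.Eventually.of_forall fun g => hinner g)
      _ = (ρ Set.univ).toReal := by simp [Measure.real]
  have hconst : ∫ b', F b' ∂ν = F b := by
    calc ∫ b', F b' ∂ν = ∫ _b' : B, F b ∂ν :=
          integral_congr_ae (Filter.Eventually.of_forall fun b' => hFconst b')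
      _ = F b := by simp [measure_univ]
  show F b = (μG Cn).toReal
  rw [← hconst, hmain, hρuniv]
end

section
/- Let p be a prime, 𝔽_p = ℤ/pℤ, and A := 𝔽_p[X,X⁻¹]. Let H := { [[X^n, P],[0, X^{−n}]] : n ∈ ℤ, P ∈ A } ≤ SL₂(A), and let S := { [[X,0],[0,X⁻¹]], [[X⁻¹,0],[0,X]], [[1,1],[0,1]], [[1,−1],[0,1]], [[1,X],[0,1]], [[1,−X],[0,1]] } ⊆ H. Then S is a symmetric generating set of H: S = S⁻¹ and the subgroup of SL₂(A) generated by S equals H. -/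
open LaurentPolynomial
open scoped MatrixGroups

namespace Stmt14

/-- The six-element set
`S = {[[X,0],[0,X⁻¹]], [[X⁻¹,0],[0,X]], [[1,±1],[0,1]], [[1,±X],[0,1]]}`
inside `SL₂(𝔽_p[X,X⁻¹])`. -/
def Sset (p : ℕ) : Set (SL(2, LaurentPolynomial (ZMod p))) :=
  {M | (M : Matrix (Fin 2) (Fin 2) (LaurentPolynomial (ZMod p))) ∈
    ({!![T 1, 0; 0, T (-1)], !![T (-1), 0; 0, T 1],
       !![1, 1; 0, 1], !![1, -1; 0, 1],
       !![1, T 1; 0, 1], !![1, -(T 1); 0, 1]} :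
      Set (Matrix (Fin 2) (Fin 2) (LaurentPolynomial (ZMod p))))}

/-- The subgroup `H = {[[Xⁿ, P],[0, X⁻ⁿ]]}` of `SL₂(𝔽_p[X,X⁻¹])`, as a set. -/
def Hset (p : ℕ) : Set (SL(2, LaurentPolynomial (ZMod p))) :=
  {M | ∃ (n : ℤ) (P : LaurentPolynomial (ZMod p)),
    (M : Matrix (Fin 2) (Fin 2) (LaurentPolynomial (ZMod p))) = !![T n, P; 0, T (-n)]}

variable (p : ℕ)

lemma detTP (n : ℤ) (P : LaurentPolynomial (ZMod p)) :
    (!![T n, P; 0, T (-n)] : Matrix (Fin 2) (Fin 2) (LaurentPolynomial (ZMod p))).det = 1 := by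
  rw [Matrix.det_fin_two_of, ← T_add]
  simp

/-- The diagonal matrix `[[Tⁿ,0],[0,T⁻ⁿ]]` as an element of `SL₂`. -/
noncomputable def Dm (n : ℤ) : SL(2, LaurentPolynomial (ZMod p)) :=
  ⟨!![T n, 0; 0, T (-n)], detTP p n 0⟩

/-- The unipotent matrix `[[1,a],[0,1]]` as an element of `SL₂`. -/
noncomputable def Um (a : LaurentPolynomial (ZMod p)) : SL(2, LaurentPolynomial (ZMod p)) :=
  ⟨!![1, a; 0, 1], by rw [Matrix.det_fin_two_of]; simp⟩

@[simp] lemma Dm_coe (n : ℤ) :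
    (Dm p n : Matrix (Fin 2) (Fin 2) (LaurentPolynomial (ZMod p))) = !![T n, 0; 0, T (-n)] := rfl

@[simp] lemma Um_coe (a : LaurentPolynomial (ZMod p)) :
    (Um p a : Matrix (Fin 2) (Fin 2) (LaurentPolynomial (ZMod p))) = !![1, a; 0, 1] := rfl

lemma Dm_mul (n m : ℤ) : Dm p n * Dm p m = Dm p (n + m) := by
  have k1 : (T n : LaurentPolynomial (ZMod p)) * T m = T (n + m) := (T_add n m).symm
  have k2 : (T (-n) : LaurentPolynomial (ZMod p)) * T (-m) = T (-(n + m)) := by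
    rw [← T_add, neg_add]
  apply Subtype.ext
  rw [Matrix.SpecialLinearGroup.coe_mul, Dm_coe, Dm_coe, Dm_coe, Matrix.mul_fin_two, k1, k2]
  simp only [mul_zero, zero_mul, add_zero, zero_add]

lemma Dm_zero : Dm p 0 = 1 := by
  apply Subtype.ext
  rw [Matrix.SpecialLinearGroup.coe_one, Dm_coe, Matrix.one_fin_two, neg_zero, T_zero]

lemma Dm_inv (n : ℤ) : (Dm p n)⁻¹ = Dm p (-n) := by
  apply inv_eq_of_mul_eq_one_right
  rw [Dm_mul, add_neg_cancel, Dm_zero]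

lemma Dm_zpow (n : ℤ) : Dm p 1 ^ n = Dm p n := by
  induction n using Int.induction_on with
  | zero => rw [zpow_zero, Dm_zero]
  | succ k ih => rw [zpow_add_one, ih, Dm_mul]
  | pred k ih =>
      rw [zpow_sub_one, ih, Dm_inv, Dm_mul]
      congr 1

lemma Um_add (a b : LaurentPolynomial (ZMod p)) : Um p a * Um p b = Um p (a + b) := by
  apply Subtype.ext
  rw [Matrix.SpecialLinearGroup.coe_mul, Um_coe, Um_coe, Um_coe, Matrix.mul_fin_two]
  simp only [mul_zero, zero_mul, add_zero, zero_add, mul_one, one_mul]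
  rw [add_comm b a]

lemma Um_zero : Um p 0 = 1 := by
  apply Subtype.ext
  rw [Matrix.SpecialLinearGroup.coe_one, Um_coe, Matrix.one_fin_two]

lemma Um_inv (a : LaurentPolynomial (ZMod p)) : (Um p a)⁻¹ = Um p (-a) := by
  apply inv_eq_of_mul_eq_one_right
  rw [Um_add, add_neg_cancel, Um_zero]

lemma Um_pow (a : LaurentPolynomial (ZMod p)) (k : ℕ) : Um p a ^ k = Um p (k • a) := by
  induction k with
  | zero => rw [pow_zero, zero_smul, Um_zero]
  | succ k ih => rw [pow_succ, ih, Um_add, succ_nsmul]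

lemma Dm_mul_Um (k : ℤ) (c : LaurentPolynomial (ZMod p)) :
    Dm p k * Um p c = Um p (T (2 * k) * c) * Dm p k := by
  have e1 : (2 : ℤ) * k + -k = k := by ring
  have key : (T (2 * k) : LaurentPolynomial (ZMod p)) * c * T (-k) = T k * c := by
    rw [mul_right_comm, ← T_add, e1]
  apply Subtype.ext
  rw [Matrix.SpecialLinearGroup.coe_mul, Matrix.SpecialLinearGroup.coe_mul,
    Dm_coe, Um_coe, Um_coe, Matrix.mul_fin_two, Matrix.mul_fin_two, key]
  simp only [mul_zero, zero_mul, add_zero, zero_add, mul_one, one_mul]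

lemma DmUmDm (k : ℤ) (c : LaurentPolynomial (ZMod p)) :
    Dm p k * Um p c * Dm p (-k) = Um p (T (2 * k) * c) := by
  rw [Dm_mul_Um, mul_assoc, Dm_mul, add_neg_cancel, Dm_zero, mul_one]

lemma DmUm_coe (n : ℤ) (a : LaurentPolynomial (ZMod p)) :
    ((Dm p n * Um p a : SL(2, LaurentPolynomial (ZMod p))) :
        Matrix (Fin 2) (Fin 2) (LaurentPolynomial (ZMod p))) = !![T n, T n * a; 0, T (-n)] := by
  rw [Matrix.SpecialLinearGroup.coe_mul, Dm_coe, Um_coe, Matrix.mul_fin_two]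
  simp only [mul_zero, zero_mul, add_zero, zero_add, mul_one, one_mul]

lemma Hset_iff (M : SL(2, LaurentPolynomial (ZMod p))) :
    M ∈ Hset p ↔ ∃ (n : ℤ) (Q : LaurentPolynomial (ZMod p)), M = Dm p n * Um p Q := by
  constructor
  · rintro ⟨n, P, h⟩
    refine ⟨n, T (-n) * P, Subtype.ext ?_⟩
    have key : (T n : LaurentPolynomial (ZMod p)) * (T (-n) * P) = P := by
      rw [← mul_assoc, ← T_add, add_neg_cancel, T_zero, one_mul]
    rw [DmUm_coe, h, key]
  · rintro ⟨n, Q, rfl⟩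
    exact ⟨n, T n * Q, DmUm_coe p n Q⟩

lemma Sset_eq : Sset p =
    {Dm p 1, Dm p (-1), Um p 1, Um p (-1), Um p (T 1), Um p (-(T 1))} := by
  ext M
  simp only [Sset, Set.mem_setOf_eq, Set.mem_insert_iff, Set.mem_singleton_iff]
  constructor
  · rintro (h | h | h | h | h | h)
    exacts [Or.inl (Subtype.ext h),
      Or.inr (Or.inl (Subtype.ext h)),
      Or.inr (Or.inr (Or.inl (Subtype.ext h))),
      Or.inr (Or.inr (Or.inr (Or.inl (Subtype.ext h)))),
      Or.inr (Or.inr (Or.inr (Or.inr (Or.inl (Subtype.ext h))))),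
      Or.inr (Or.inr (Or.inr (Or.inr (Or.inr (Subtype.ext h)))))]
  · rintro (rfl | rfl | rfl | rfl | rfl | rfl) <;> simp

/-- `H` as a subgroup of `SL₂`. -/
noncomputable def Hsub : Subgroup (SL(2, LaurentPolynomial (ZMod p))) where
  carrier := Hset p
  one_mem' := ⟨0, 0, by
    rw [Matrix.SpecialLinearGroup.coe_one, Matrix.one_fin_two, neg_zero, T_zero]⟩
  mul_mem' := by
    rintro M N ⟨n, P, hM⟩ ⟨m, Q, hN⟩
    refine ⟨n + m, T n * Q + P * T (-m), ?_⟩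
    have k1 : (T n : LaurentPolynomial (ZMod p)) * T m = T (n + m) := (T_add n m).symm
    have k2 : (T (-n) : LaurentPolynomial (ZMod p)) * T (-m) = T (-(n + m)) := by
      rw [← T_add, neg_add]
    rw [Matrix.SpecialLinearGroup.coe_mul, hM, hN, Matrix.mul_fin_two, k1, k2]
    simp only [mul_zero, zero_mul, add_zero, zero_add]
  inv_mem' := by
    rintro M ⟨n, P, hM⟩
    have hinv : M⁻¹ = ⟨!![T (-n), -P; 0, T (- -n)], detTP p (-n) (-P)⟩ := by
      apply inv_eq_of_mul_eq_one_right
      apply Subtype.ext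
      have k1 : (T n : LaurentPolynomial (ZMod p)) * T (-n) = 1 := by
        rw [← T_add, add_neg_cancel, T_zero]
      have k2 : (T (-n) : LaurentPolynomial (ZMod p)) * T (- -n) = 1 := by
        rw [← T_add, neg_neg, neg_add_cancel, T_zero]
      have k3 : (T n : LaurentPolynomial (ZMod p)) * -P + P * T (- -n) = 0 := by
        rw [neg_neg]; ring
      show (M : Matrix (Fin 2) (Fin 2) (LaurentPolynomial (ZMod p))) *
        !![T (-n), -P; 0, T (- -n)] = 1
      rw [hM, Matrix.one_fin_two]
      show (!![T n, P; 0, T (-n)] : Matrix (Fin 2) (Fin 2) (LaurentPolynomial (ZMod p))) *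
        !![T (-n), -P; 0, T (- -n)] = !![1, 0; 0, 1]
      rw [Matrix.mul_fin_two, k1, k2, k3]
      simp only [mul_zero, zero_mul, add_zero, zero_add, mul_neg, neg_zero]
    exact ⟨-n, -P, by rw [hinv]⟩

lemma Dm_mem_closure (n : ℤ) : Dm p n ∈ Subgroup.closure (Sset p) := by
  rw [← Dm_zpow]
  exact zpow_mem (Subgroup.subset_closure (by rw [Sset_eq]; simp)) n

lemma UmT_mem_closure (m : ℤ) : Um p (T m) ∈ Subgroup.closure (Sset p) := by
  have key : ∀ (k : ℤ) (c : LaurentPolynomial (ZMod p)),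
      Um p c ∈ Subgroup.closure (Sset p) →
      Um p (T (2 * k) * c) ∈ Subgroup.closure (Sset p) := by
    intro k c hc
    rw [← DmUmDm]
    exact mul_mem (mul_mem (Dm_mem_closure p k) hc) (Dm_mem_closure p (-k))
  rcases Int.emod_two_eq_zero_or_one m with h | h
  · have hm : m = 2 * (m / 2) := by omega
    rw [hm, ← mul_one (T (2 * (m / 2)) : LaurentPolynomial (ZMod p))]
    exact key _ _ (Subgroup.subset_closure (by rw [Sset_eq]; simp))
  · have hm : m = 2 * (m / 2) + 1 := by omega
    rw [hm, T_add]
    exact key _ _ (Subgroup.subset_closure (by rw [Sset_eq]; simp))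

lemma Um_mem_closure [NeZero p] (P : LaurentPolynomial (ZMod p)) :
    Um p P ∈ Subgroup.closure (Sset p) := by
  refine LaurentPolynomial.induction_on' P (fun f g hf hg => ?_) (fun n a => ?_)
  · rw [← Um_add]
    exact mul_mem hf hg
  · have key : (C a : LaurentPolynomial (ZMod p)) * T n = a.val • T n := by
      rw [nsmul_eq_mul]
      congr 1
      rw [← map_natCast (C : ZMod p →+* LaurentPolynomial (ZMod p)) a.val,
        ZMod.natCast_val, ZMod.cast_id]
    rw [key, ← Um_pow]
    exact pow_mem (UmT_mem_closure p n) _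

end Stmt14

/-- **`S` is a symmetric generating set of the lamplighter subgroup `H`.**
For `p` prime and `A = 𝔽_p[X,X⁻¹]`, the set
`S = {[[X,0],[0,X⁻¹]], [[X⁻¹,0],[0,X]], [[1,±1],[0,1]], [[1,±X],[0,1]]}`
satisfies `S = S⁻¹` and the subgroup of `SL₂(A)` generated by `S` is exactly
`H = {[[Xⁿ,P],[0,X⁻ⁿ]] : n ∈ ℤ, P ∈ A}`. -/
theorem statement14 (p : ℕ) (hp : p.Prime) [Fact p.Prime] :
    (Stmt14.Sset p)⁻¹ = Stmt14.Sset p ∧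
      (Subgroup.closure (Stmt14.Sset p) :
        Set (SL(2, LaurentPolynomial (ZMod p)))) = Stmt14.Hset p := by
  haveI : NeZero p := ⟨hp.ne_zero⟩
  constructor
  · -- symmetry
    have hinv : ∀ x ∈ ({Stmt14.Dm p 1, Stmt14.Dm p (-1), Stmt14.Um p 1, Stmt14.Um p (-1),
        Stmt14.Um p (T 1), Stmt14.Um p (-(T 1))} :
          Set (SL(2, LaurentPolynomial (ZMod p)))),
        x⁻¹ ∈ ({Stmt14.Dm p 1, Stmt14.Dm p (-1), Stmt14.Um p 1, Stmt14.Um p (-1),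
          Stmt14.Um p (T 1), Stmt14.Um p (-(T 1))} :
            Set (SL(2, LaurentPolynomial (ZMod p)))) := by
      intro x hx
      simp only [Set.mem_insert_iff, Set.mem_singleton_iff] at hx
      rcases hx with rfl | rfl | rfl | rfl | rfl | rfl <;>
        simp [Stmt14.Dm_inv, Stmt14.Um_inv, Set.mem_insert_iff, Set.mem_singleton_iff]
    rw [Stmt14.Sset_eq]
    ext z
    rw [Set.mem_inv]
    constructor
    · intro h
      have := hinv _ h
      simpa using this
    · intro h
      exact hinv _ h
  · -- generation
    apply Set.Subset.antisymm
    · intro x hx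
      have hle : Subgroup.closure (Stmt14.Sset p) ≤ Stmt14.Hsub p := by
        rw [Subgroup.closure_le]
        intro y hy
        rw [Stmt14.Sset_eq] at hy
        simp only [Set.mem_insert_iff, Set.mem_singleton_iff] at hy
        rcases hy with rfl | rfl | rfl | rfl | rfl | rfl
        · exact ⟨1, 0, rfl⟩
        · exact ⟨-1, 0, rfl⟩
        all_goals exact ⟨0, _, by rw [Stmt14.Um_coe, neg_zero, T_zero]⟩
      exact hle hx
    · intro x hx
      rw [SetLike.mem_coe]
      rcases (Stmt14.Hset_iff p x).mp hx with ⟨n, Q, rfl⟩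
      exact mul_mem (Stmt14.Dm_mem_closure p n) (Stmt14.Um_mem_closure p Q)
end

section
/- Let q be a prime power, 𝔽_q the field with q elements, A := 𝔽_q[X,X⁻¹], and let S := { [[X,0],[0,X⁻¹]], [[X⁻¹,0],[0,X]], [[1,1],[0,1]], [[1,−1],[0,1]], [[1,X],[0,1]], [[1,−X],[0,1]] } ⊆ SL₂(A). For P ∈ A write γ(P) := [[1,P],[0,1]]. Then for every n ∈ ℕ and every function a : {0,…,n} → {0,1} ⊆ 𝔽_q, the matrix γ(Σ_{i=0}^n a_i X^{2i}) is a product of a list of at most 3n+1 elements of S; moreover the map a ↦ γ(Σ_{i=0}^n a_i X^{2i}) is injective. Consequently, the set of elements of SL₂(A) expressible as products of at most 3n+1 elements of S has cardinality at least 2^{n+1}; in particular the subgroup generated by S has exponential growth. -/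
open LaurentPolynomial
open scoped MatrixGroups

namespace Stmt15

/-- The six-element set
`S = {[[X,0],[0,X⁻¹]], [[X⁻¹,0],[0,X]], [[1,±1],[0,1]], [[1,±X],[0,1]]}`
inside `SL₂(F[X,X⁻¹])`. -/
def Sset (F : Type*) [Field F] : Set (SL(2, LaurentPolynomial F)) :=
  {M | (M : Matrix (Fin 2) (Fin 2) (LaurentPolynomial F)) ∈
    ({!![T 1, 0; 0, T (-1)], !![T (-1), 0; 0, T 1],
       !![1, 1; 0, 1], !![1, -1; 0, 1],
       !![1, T 1; 0, 1], !![1, -(T 1); 0, 1]} :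
      Set (Matrix (Fin 2) (Fin 2) (LaurentPolynomial F)))}

variable (F : Type*) [Field F]

lemma TT : (T 1 : LaurentPolynomial F) * T (-1) = 1 := by
  rw [← T_add]; norm_num

lemma T2 : (T 2 : LaurentPolynomial F) = T 1 * T 1 := by
  rw [← T_add]; norm_num

noncomputable def Dm : SL(2, LaurentPolynomial F) :=
  ⟨!![T 1, 0; 0, T (-1)], by rw [Matrix.det_fin_two_of, ← T_add]; norm_num⟩

noncomputable def Dinv : SL(2, LaurentPolynomial F) :=
  ⟨!![T (-1), 0; 0, T 1], by rw [Matrix.det_fin_two_of, ← T_add]; norm_num⟩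

noncomputable def U : SL(2, LaurentPolynomial F) :=
  ⟨!![1, 1; 0, 1], by rw [Matrix.det_fin_two_of]; ring⟩

lemma Dm_mem : Dm F ∈ Sset F := by exact Or.inl rfl
lemma Dinv_mem : Dinv F ∈ Sset F := by exact Or.inr (Or.inl rfl)
lemma U_mem : U F ∈ Sset F := by exact Or.inr (Or.inr (Or.inl rfl))

lemma conj (P : LaurentPolynomial F) :
    (!![T 1, 0; 0, T (-1)] * !![1, P; 0, 1] * !![T (-1), 0; 0, T 1] :
      Matrix (Fin 2) (Fin 2) (LaurentPolynomial F)) = !![1, T 2 * P; 0, 1] := by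
  rw [Matrix.mul_fin_two, Matrix.mul_fin_two]
  simp only [mul_one, one_mul, mul_zero, zero_mul, add_zero, zero_add]
  rw [TT, mul_comm (T (-1) : LaurentPolynomial F) (T 1), TT,
    show (T 1 : LaurentPolynomial F) * P * T 1 = T 2 * P by rw [T2]; ring]

lemma gamma_mul (c Q : LaurentPolynomial F) :
    (!![1, c; 0, 1] * !![1, Q; 0, 1] : Matrix (Fin 2) (Fin 2) (LaurentPolynomial F)) =
      !![1, c + Q; 0, 1] := by
  rw [Matrix.mul_fin_two]
  simp only [mul_one, one_mul, mul_zero, zero_mul, add_zero, zero_add, add_comm Q c]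

lemma sum_succ (m : ℕ) (a : Fin (m + 2) → F) :
    ∑ i : Fin (m + 2), C (a i) * T (2 * (i : ℤ)) =
      C (a 0) + T 2 * ∑ i : Fin (m + 1), C (a i.succ) * T (2 * (i : ℤ)) := by
  rw [Fin.sum_univ_succ, Finset.mul_sum]
  congr 1
  · simp
  · refine Finset.sum_congr rfl fun i _ => ?_
    have h : ((i.succ : Fin (m + 2)) : ℤ) = (i : ℤ) + 1 := by
      simp [Fin.val_succ]
    rw [h, show 2 * ((i : ℤ) + 1) = 2 + 2 * (i : ℤ) by ring, T_add]
    ring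

lemma key (n : ℕ) (a : Fin (n + 1) → F) (h : ∀ i, a i = 0 ∨ a i = 1) :
    ∃ l : List (SL(2, LaurentPolynomial F)),
      (∀ x ∈ l, x ∈ Sset F) ∧ l.length ≤ 3 * n + 1 ∧
        (l.prod : Matrix (Fin 2) (Fin 2) (LaurentPolynomial F)) =
          !![1, ∑ i : Fin (n + 1), C (a i) * T (2 * (i : ℤ)); 0, 1] := by
  induction n with
  | zero =>
    rcases h 0 with h0 | h0
    · exact ⟨[], by simp, by simp, by
        simp [Fin.sum_univ_one, h0, Matrix.one_fin_two]⟩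
    · exact ⟨[U F], by simpa using U_mem F, by simp, by
        rw [List.prod_singleton]; simp [Fin.sum_univ_one, h0, U]⟩
  | succ m ih =>
    obtain ⟨l, hl, hlen, hprod⟩ := ih (fun i => a i.succ) (fun i => h i.succ)
    set P : LaurentPolynomial F := ∑ i : Fin (m + 1), C (a i.succ) * T (2 * (i : ℤ)) with hP
    have hDlD : ((Dm F * (l.prod * Dinv F) : SL(2, LaurentPolynomial F)) :
        Matrix (Fin 2) (Fin 2) (LaurentPolynomial F)) = !![1, T 2 * P; 0, 1] := by
      rw [Matrix.SpecialLinearGroup.coe_mul, Matrix.SpecialLinearGroup.coe_mul, hprod]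
      rw [show ((Dm F : SL(2, LaurentPolynomial F)) :
        Matrix (Fin 2) (Fin 2) (LaurentPolynomial F)) = !![T 1, 0; 0, T (-1)] from rfl,
        show ((Dinv F : SL(2, LaurentPolynomial F)) :
        Matrix (Fin 2) (Fin 2) (LaurentPolynomial F)) = !![T (-1), 0; 0, T 1] from rfl,
        ← mul_assoc, conj]
    rcases h 0 with h0 | h0
    · refine ⟨Dm F :: (l ++ [Dinv F]), ?_, ?_, ?_⟩
      · intro x hx
        rcases List.mem_cons.1 hx with rfl | hx
        · exact Dm_mem F
        rcases List.mem_append.1 hx with hx | hx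
        · exact hl x hx
        · rcases List.mem_singleton.1 hx with rfl
          exact Dinv_mem F
      · simp only [List.length_cons, List.length_append, List.length_singleton,
          List.length_nil]
        omega
      · rw [List.prod_cons, List.prod_append, List.prod_singleton, hDlD, sum_succ, h0]
        simp [← hP]
    · refine ⟨U F :: Dm F :: (l ++ [Dinv F]), ?_, ?_, ?_⟩
      · intro x hx
        rcases List.mem_cons.1 hx with rfl | hx
        · exact U_mem F
        rcases List.mem_cons.1 hx with rfl | hx
        · exact Dm_mem F
        rcases List.mem_append.1 hx with hx | hx
        · exact hl x hx
        · rcases List.mem_singleton.1 hx with rfl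
          exact Dinv_mem F
      · simp only [List.length_cons, List.length_append, List.length_singleton,
          List.length_nil]
        omega
      · rw [List.prod_cons, List.prod_cons, List.prod_append, List.prod_singleton,
          Matrix.SpecialLinearGroup.coe_mul, hDlD,
          show ((U F : SL(2, LaurentPolynomial F)) :
            Matrix (Fin 2) (Fin 2) (LaurentPolynomial F)) = !![1, 1; 0, 1] from rfl,
          gamma_mul, sum_succ, h0]
        simp [← hP]

lemma apply_sum (n : ℕ) (c : Fin (n + 1) → F) (j : Fin (n + 1)) :
    ((∑ i : Fin (n + 1), C (c i) * T (2 * (i : ℤ)) : LaurentPolynomial F)).coeff (2 * (j : ℤ)) =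
      c j := by
  rw [AddMonoidAlgebra.coeff_sum, Finsupp.finset_sum_apply]
  have h : ∀ i : Fin (n + 1),
      (C (c i) * T (2 * (i : ℤ)) : LaurentPolynomial F).coeff (2 * (j : ℤ)) =
        if i = j then c i else 0 := by
    intro i
    rw [← single_eq_C_mul_T, AddMonoidAlgebra.coeff_single, Finsupp.single_apply]
    by_cases hij : i = j
    · subst hij; simp
    · rw [if_neg hij, if_neg]
      intro hc
      exact hij (Fin.ext (by exact_mod_cast mul_left_cancel₀ (two_ne_zero) hc))
  simp only [h]
  simp

lemma inj (n : ℕ) (a b : Fin (n + 1) → F)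
    (hs : (∑ i : Fin (n + 1), C (a i) * T (2 * (i : ℤ))) =
      ∑ i : Fin (n + 1), C (b i) * T (2 * (i : ℤ))) : a = b := by
  funext j
  have := congrFun (congrArg (fun f : LaurentPolynomial F => (f.coeff : ℤ → F)) hs) (2 * (j : ℤ))
  rwa [apply_sum, apply_sum] at this

lemma Sset_finite : (Sset F).Finite := by
  have h6 : ({!![T 1, 0; 0, T (-1)], !![T (-1), 0; 0, T 1],
       !![1, 1; 0, 1], !![1, -1; 0, 1],
       !![1, T 1; 0, 1], !![1, -(T 1); 0, 1]} :
      Set (Matrix (Fin 2) (Fin 2) (LaurentPolynomial F))).Finite := by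
    apply Set.Finite.insert; apply Set.Finite.insert; apply Set.Finite.insert
    apply Set.Finite.insert; apply Set.Finite.insert; exact Set.finite_singleton _
  exact h6.preimage (Subtype.coe_injective.injOn)

lemma lists_finite {G : Type*} {s : Set G} (hs : s.Finite) (k : ℕ) :
    {l : List G | (∀ x ∈ l, x ∈ s) ∧ l.length ≤ k}.Finite := by
  haveI := hs.to_subtype
  have hsub : {l : List G | (∀ x ∈ l, x ∈ s) ∧ l.length ≤ k} ⊆
      (List.map (Subtype.val : s → G)) '' {l : List s | l.length ≤ k} := by
    rintro l ⟨hmem, hlen⟩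
    refine ⟨l.pmap (fun x hx => (⟨x, hx⟩ : s)) hmem, by simpa using hlen, ?_⟩
    simp [List.map_pmap]
  exact ((List.finite_length_le s k).image _).subset hsub

end Stmt15

/-- **Exponential growth of the lamplighter subgroup.** Let `F = 𝔽_q` be a
finite field and `A = F[X,X⁻¹]`. For every `n` and every `a : {0,…,n} → {0,1}`,
the matrix `γ(Σ_{i≤n} aᵢ X^{2i}) = [[1, Σ aᵢ X^{2i}],[0,1]]` is a product of a
list of at most `3n+1` elements of `S`; the map `a ↦ γ(Σ aᵢ X^{2i})` is
injective; consequently the set of elements of `SL₂(A)` expressible as products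
of at most `3n+1` elements of `S` has at least `2^(n+1)` elements. -/
theorem statement15 (F : Type*) [Field F] [Fintype F] (n : ℕ) :
    (∀ a : Fin (n + 1) → F, (∀ i, a i = 0 ∨ a i = 1) →
      ∃ l : List (SL(2, LaurentPolynomial F)),
        (∀ x ∈ l, x ∈ Stmt15.Sset F) ∧ l.length ≤ 3 * n + 1 ∧
          (l.prod : Matrix (Fin 2) (Fin 2) (LaurentPolynomial F)) =
            !![1, ∑ i : Fin (n + 1), C (a i) * T (2 * (i : ℤ)); 0, 1]) ∧
    (∀ a b : Fin (n + 1) → F, (∀ i, a i = 0 ∨ a i = 1) → (∀ i, b i = 0 ∨ b i = 1) →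
      (∑ i : Fin (n + 1), C (a i) * T (2 * (i : ℤ))) =
        (∑ i : Fin (n + 1), C (b i) * T (2 * (i : ℤ))) → a = b) ∧
    2 ^ (n + 1) ≤
      {M : SL(2, LaurentPolynomial F) |
        ∃ l : List (SL(2, LaurentPolynomial F)),
          (∀ x ∈ l, x ∈ Stmt15.Sset F) ∧ l.length ≤ 3 * n + 1 ∧ l.prod = M}.ncard := by
  refine ⟨Stmt15.key F n, fun a b _ _ hs => Stmt15.inj F n a b hs, ?_⟩
  set Tset : Set (SL(2, LaurentPolynomial F)) :=
    {M : SL(2, LaurentPolynomial F) |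
      ∃ l : List (SL(2, LaurentPolynomial F)),
        (∀ x ∈ l, x ∈ Stmt15.Sset F) ∧ l.length ≤ 3 * n + 1 ∧ l.prod = M} with hT
  have hTfin : Tset.Finite := by
    have : Tset ⊆ List.prod ''
        {l : List (SL(2, LaurentPolynomial F)) |
          (∀ x ∈ l, x ∈ Stmt15.Sset F) ∧ l.length ≤ 3 * n + 1} := by
      rintro M ⟨l, h1, h2, h3⟩
      exact ⟨l, ⟨h1, h2⟩, h3⟩
    exact ((Stmt15.lists_finite (Stmt15.Sset_finite F) (3 * n + 1)).image _).subset this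
  -- the injection from Boolean sequences
  have detP : ∀ P : LaurentPolynomial F, Matrix.det !![1, P; 0, 1] = 1 := fun P => by
    rw [Matrix.det_fin_two_of]; ring
  set f : (Fin (n + 1) → Bool) → SL(2, LaurentPolynomial F) :=
    fun b => ⟨!![1, ∑ i : Fin (n + 1), C (if b i then (1 : F) else 0) * T (2 * (i : ℤ)); 0, 1],
      detP _⟩ with hf
  have hrange : Set.range f ⊆ Tset := by
    rintro M ⟨b, rfl⟩
    obtain ⟨l, hl, hlen, hprod⟩ := Stmt15.key F n (fun i => if b i then (1 : F) else 0)
      (fun i => by by_cases hb : b i <;> simp [hb])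
    exact ⟨l, hl, hlen, Subtype.coe_injective (hprod.trans rfl)⟩
  have hinj : Function.Injective f := by
    intro b₁ b₂ hb
    have hP := congrFun (congrFun (congrArg Subtype.val hb) 0) 1
    simp only [hf, Matrix.cons_val', Matrix.cons_val_one, Matrix.head_cons,
      Matrix.cons_val_zero, Matrix.empty_val', Matrix.cons_val_fin_one, Matrix.head_val'] at hP
    have ha := Stmt15.inj F n _ _ hP
    funext i
    have := congrFun ha i
    cases hb₁ : b₁ i <;> cases hb₂ : b₂ i <;> simp_all
  calc 2 ^ (n + 1) = Nat.card (Fin (n + 1) → Bool) := by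
        simp [Nat.card_eq_fintype_card]
    _ = Nat.card (Set.range f) := (Nat.card_range_of_injective hinj).symm
    _ = (Set.range f).ncard := Nat.card_coe_set_eq _
    _ ≤ Tset.ncard := Set.ncard_le_ncard hrange hTfin
end

section
/- Let q be a prime power and Γ := SL₂(𝔽_q[X,X⁻¹]). Then Γ does not have property RD with respect to any proper length function: for every length function L on Γ with finite sublevel sets, there is no polynomial P with real coefficients such that ⦀f⦀ ≤ P(L(f))·‖f‖₂ for all finitely supported f : Γ → ℂ. -/
open scoped MatrixGroups

namespace Stmt16

variable {G : Type*} [Group G]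

/-- Convolution of a finitely supported function with an arbitrary function. -/
noncomputable def conv (f : G →₀ ℂ) (ξ : G → ℂ) : G → ℂ :=
  fun g => ∑ h ∈ f.support, f h * ξ (h⁻¹ * g)

/-- The operator norm of the convolution operator `ξ ↦ f * ξ` on `ℓ²(G)` is at most `C`. -/
noncomputable def ConvOpNormLE (f : G →₀ ℂ) (C : ℝ) : Prop :=
  ∀ ξ : lp (fun _ : G => ℂ) 2, ∃ hmem : Memℓp (conv f (ξ : ∀ _ : G, ℂ)) 2,
    ‖(⟨conv f (ξ : ∀ _ : G, ℂ), hmem⟩ : lp (fun _ : G => ℂ) 2)‖ ≤ C * ‖ξ‖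

/-- The ℓ²-norm of a finitely supported function. -/
noncomputable def l2norm (f : G →₀ ℂ) : ℝ :=
  Real.sqrt (∑ g ∈ f.support, ‖f g‖ ^ 2)

/-- `L(f) = max {L g : f g ≠ 0}`. -/
noncomputable def lenOf (L : G → ℝ) (f : G →₀ ℂ) : ℝ :=
  sSup (L '' {g | f g ≠ 0})

def IsLengthFun (L : G → ℝ) : Prop :=
  L 1 = 0 ∧ (∀ g, 0 ≤ L g) ∧ (∀ g, L g⁻¹ = L g) ∧ ∀ g h, L (g * h) ≤ L g + L h

/-- Property RD with respect to `L`. -/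
def HasRD (L : G → ℝ) : Prop :=
  ∃ P : Polynomial ℝ, ∀ f : G →₀ ℂ,
    ConvOpNormLE f (P.eval (lenOf L f) * l2norm f)

end Stmt16


open scoped MatrixGroups LaurentPolynomial
open LaurentPolynomial (T C)

set_option maxHeartbeats 1000000
namespace Stmt16Aux

/-! ### Polynomial asymptotics -/

theorem exists_majorant (P : Polynomial ℝ) :
    ∃ Q : Polynomial ℝ, ∀ x y : ℝ, 0 ≤ x → x ≤ y → P.eval x ≤ Q.eval y := by
  refine ⟨∑ i ∈ Finset.range (P.natDegree + 1), Polynomial.C |P.coeff i| * Polynomial.X ^ i, ?_⟩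
  intro x y hx hxy
  rw [Polynomial.eval_eq_sum_range, Polynomial.eval_finset_sum]
  apply Finset.sum_le_sum
  intro i _
  simp only [Polynomial.eval_mul, Polynomial.eval_C, Polynomial.eval_pow, Polynomial.eval_X]
  calc P.coeff i * x ^ i ≤ |P.coeff i| * x ^ i :=
        mul_le_mul_of_nonneg_right (le_abs_self _) (pow_nonneg hx i)
    _ ≤ |P.coeff i| * y ^ i :=
        mul_le_mul_of_nonneg_left (pow_le_pow_left₀ hx hxy i) (abs_nonneg _)

theorem poly_lt_pow (R : Polynomial ℝ) {K : ℝ} (hK : 2 ≤ K) : ∃ n : ℕ, R.eval (n:ℝ) < K ^ n := by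
  have hK1 : 1 < K := by linarith
  have hK0 : 0 < K := by linarith
  have hc : 0 < Real.log K := Real.log_pos hK1
  set S := R.comp (Polynomial.C (Real.log K)⁻¹ * Polynomial.X) with hS
  have h := S.tendsto_div_exp_atTop
  have hn : Filter.Tendsto (fun n : ℕ => (n : ℝ) * Real.log K) Filter.atTop Filter.atTop :=
    Filter.Tendsto.atTop_mul_const hc tendsto_natCast_atTop_atTop
  have h2 := h.comp hn
  have h3 : ((fun x => S.eval x / Real.exp x) ∘ fun n : ℕ => (n:ℝ) * Real.log K)
      = fun n : ℕ => R.eval (n:ℝ) / K ^ n := by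
    funext n
    show S.eval ((n:ℝ) * Real.log K) / Real.exp ((n:ℝ) * Real.log K) = _
    rw [hS]
    simp only [Polynomial.eval_comp, Polynomial.eval_mul, Polynomial.eval_C, Polynomial.eval_X]
    rw [mul_comm (n:ℝ) (Real.log K), ← mul_assoc, inv_mul_cancel₀ (ne_of_gt hc), one_mul,
      mul_comm (Real.log K) (n:ℝ), Real.exp_nat_mul, Real.exp_log hK0]
  rw [h3] at h2
  have h5 := h2.eventually_lt_const (show (0:ℝ) < 1 by norm_num)
  obtain ⟨n, hn5⟩ := h5.exists
  exact ⟨n, by rwa [div_lt_one (pow_pos hK0 n)] at hn5⟩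

/-! ### Indicator functions of finite subgroups and the convolution norm -/

/-- indicator of a finset as a finitely supported function -/
noncomputable def finind {G : Type*} [DecidableEq G] (A : Finset G) : G →₀ ℂ :=
  ⟨A, fun g => if g ∈ A then 1 else 0, by intro a; by_cases h : a ∈ A <;> simp [h]⟩

theorem finind_apply {G : Type*} [DecidableEq G] (A : Finset G) (g : G) :
    finind A g = if g ∈ A then 1 else 0 := rfl

theorem finind_support {G : Type*} [DecidableEq G] (A : Finset G) :
    (finind A).support = A := rfl

theorem finind_l2norm {G : Type*} [Group G] [DecidableEq G] (A : Finset G) :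
    Stmt16.l2norm (finind A) = Real.sqrt A.card := by
  unfold Stmt16.l2norm
  rw [finind_support]
  congr 1
  rw [Finset.sum_congr rfl (fun g hg => show ‖finind A g‖^2 = 1 by
    rw [finind_apply, if_pos hg]; simp)]
  simp

theorem finind_card_le {G : Type*} [Group G] [DecidableEq G] (A : Finset G) (hne : A.Nonempty)
    (hsub : ∀ a ∈ A, ∀ g : G, a⁻¹ * g ∈ A ↔ g ∈ A) {Cb : ℝ}
    (h : Stmt16.ConvOpNormLE (finind A) Cb) : (A.card : ℝ) ≤ Cb := by
  classical
  set ξ0 : G → ℂ := fun g => if g ∈ A then 1 else 0 with hξ0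
  have hmem : Memℓp ξ0 2 := memℓp_gen (by
    apply summable_of_ne_finset_zero (s := A)
    intro g hg
    simp [ξ0, hg, Real.zero_rpow])
  set ξ : lp (fun _ : G => ℂ) 2 := ⟨ξ0, hmem⟩ with hξ
  obtain ⟨hm, hle⟩ := h ξ
  have hcoe : (ξ : ∀ _ : G, ℂ) = ξ0 := rfl
  have hconv : Stmt16.conv (finind A) ξ0 = (A.card : ℂ) • ξ0 := by
    funext g
    show ∑ h ∈ (finind A).support, finind A h * ξ0 (h⁻¹ * g) = _
    rw [finind_support]
    rw [Finset.sum_congr rfl (fun a ha => show finind A a * ξ0 (a⁻¹ * g) = ξ0 g by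
      rw [finind_apply, if_pos ha, one_mul, hξ0]
      simp only
      rw [if_congr (hsub a ha g) rfl rfl])]
    rw [Finset.sum_const]
    simp [smul_eq_mul]
  have hEeq : (⟨Stmt16.conv (finind A) (ξ : ∀ _ : G, ℂ), hm⟩ : lp (fun _ : G => ℂ) 2)
      = (A.card : ℂ) • ξ := by
    apply Subtype.ext
    have h9 : ((((A.card : ℂ)) • ξ : lp (fun _ : G => ℂ) 2) : ∀ _ : G, ℂ) = (A.card : ℂ) • ξ0 := rfl
    show Stmt16.conv (finind A) (ξ : ∀ _ : G, ℂ)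
        = (((A.card : ℂ) • ξ : lp (fun _ : G => ℂ) 2) : ∀ _ : G, ℂ)
    rw [h9, hcoe, hconv]
  rw [hEeq, norm_smul] at hle
  have hξpos : 0 < ‖ξ‖ := by
    rw [norm_pos_iff]
    intro h0
    obtain ⟨a, ha⟩ := hne
    have h1 : ξ0 a = 0 := by
      have := congrArg (fun v : lp (fun _ : G => ℂ) 2 => (v : ∀ _ : G, ℂ) a) h0
      simpa [hcoe] using this
    simp [ξ0, ha] at h1
  have hnrm : ‖(A.card : ℂ)‖ = (A.card : ℝ) := by simp
  rw [hnrm] at hle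
  exact le_of_mul_le_mul_right hle hξpos

/-! ### Explicit elements of `SL₂` over Laurent polynomials -/

variable (F : Type*) [Field F]

noncomputable def u (p : F[T;T⁻¹]) : SL(2, F[T;T⁻¹]) :=
  ⟨!![1, p; 0, 1], by simp [Matrix.det_fin_two_of]⟩

noncomputable def dm (m : ℤ) : SL(2, F[T;T⁻¹]) :=
  ⟨!![T m, 0; 0, T (-m)], by
    rw [Matrix.det_fin_two_of, ← LaurentPolynomial.T_add]
    simp⟩

variable {F}
theorem u_mul (p q : F[T;T⁻¹]) : u F p * u F q = u F (p + q) :=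
  Subtype.ext (by rw [Matrix.SpecialLinearGroup.coe_mul]; simp [u, Matrix.mul_fin_two, add_comm])

theorem u_zero : u F 0 = 1 :=
  Subtype.ext (by simp [u]; exact (Matrix.one_fin_two).symm)

theorem u_inj : Function.Injective (u F) := by
  intro p q h
  have := congrArg (fun g : SL(2, F[T;T⁻¹]) => (g : Matrix (Fin 2) (Fin 2) (F[T;T⁻¹])) 0 1) h
  simpa [u] using this

theorem dm_mul (a b : ℤ) : dm F a * dm F b = dm F (a + b) := by
  apply Subtype.ext
  show (!![T a, 0; 0, T (-a)] : Matrix (Fin 2) (Fin 2) (F[T;T⁻¹])) * !![T b, 0; 0, T (-b)] = _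
  rw [Matrix.mul_fin_two, ← LaurentPolynomial.T_add, ← LaurentPolynomial.T_add]
  norm_num [dm, neg_add, add_comm]

theorem dm_zero : dm F 0 = 1 :=
  Subtype.ext (by simp [dm]; exact (Matrix.one_fin_two).symm)

theorem dm_neg (m : ℤ) : dm F (-m) = (dm F m)⁻¹ := by
  apply eq_inv_of_mul_eq_one_left
  rw [dm_mul, neg_add_cancel, dm_zero]

theorem dm_conj (m : ℤ) (p : F[T;T⁻¹]) :
    dm F m * u F p * dm F (-m) = u F (T (2*m) * p) := by
  apply Subtype.ext
  show (!![T m, 0; 0, T (-m)] : Matrix (Fin 2) (Fin 2) (F[T;T⁻¹])) * !![1, p; 0, 1]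
      * !![T (-m), 0; 0, T (-(-m))] = !![1, T (2*m) * p; 0, 1]
  rw [Matrix.mul_fin_two, Matrix.mul_fin_two]
  simp only [one_mul, mul_one, zero_mul, mul_zero, add_zero, zero_add, neg_neg]
  have h1 : (T m : F[T;T⁻¹]) * T (-m) = 1 := by
    rw [← LaurentPolynomial.T_add]; simp
  have h2 : (T (-m) : F[T;T⁻¹]) * T m = 1 := by
    rw [← LaurentPolynomial.T_add]; simp
  have h3 : (T m : F[T;T⁻¹]) * p * T m = T (2*m) * p := by
    rw [mul_comm (T m) p, LaurentPolynomial.mul_T_assoc, mul_comm, two_mul]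
  rw [h1, h2, h3]

/-! ### The length estimates -/

/-- constant bounding lengths of the "small" unipotents -/
noncomputable def Mconst (L : SL(2, F[T;T⁻¹]) → ℝ) [Fintype F] : ℝ :=
  ∑ c : F, (L (u F (C c)) + L (u F (C c * T 1)))

section Length
variable {L : SL(2, F[T;T⁻¹]) → ℝ} (hlen : Stmt16.IsLengthFun L)
include hlen

theorem len_dm_nat (n : ℕ) :
    L (dm F n) ≤ n * L (dm F 1) ∧ L (dm F (-n)) ≤ n * L (dm F 1) := by
  induction n with
  | zero => simp [dm_zero, hlen.1]
  | succ n ih =>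
    constructor
    · calc L (dm F (n+1 : ℕ)) = L (dm F n * dm F 1) := by rw [dm_mul]; norm_num [add_comm]
        _ ≤ L (dm F n) + L (dm F 1) := hlen.2.2.2 _ _
        _ ≤ n * L (dm F 1) + L (dm F 1) := by linarith [ih.1]
        _ = (n+1 : ℕ) * L (dm F 1) := by push_cast; ring
    · calc L (dm F (-(n+1 : ℕ))) = L (dm F (-n) * dm F (-1)) := by rw [dm_mul]; norm_num [add_comm]
        _ ≤ L (dm F (-n)) + L (dm F (-1)) := hlen.2.2.2 _ _
        _ ≤ n * L (dm F 1) + L (dm F 1) := by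
            have : L (dm F (-1)) = L (dm F 1) := by rw [dm_neg]; exact hlen.2.2.1 _
            linarith [ih.2]
        _ = (n+1 : ℕ) * L (dm F 1) := by push_cast; ring

theorem len_dm (m : ℤ) : L (dm F m) ≤ |m| * L (dm F 1) := by
  obtain ⟨n, rfl | rfl⟩ := m.eq_nat_or_neg
  · simpa using (len_dm_nat hlen n).1
  · simpa using (len_dm_nat hlen n).2

theorem len_conj (m : ℤ) (p : F[T;T⁻¹]) :
    L (u F (T (2*m) * p)) ≤ 2 * |(m:ℝ)| * L (dm F 1) + L (u F p) := by
  rw [← dm_conj]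
  calc L (dm F m * u F p * dm F (-m)) ≤ L (dm F m * u F p) + L (dm F (-m)) := hlen.2.2.2 _ _
    _ ≤ L (dm F m) + L (u F p) + L (dm F (-m)) := by linarith [hlen.2.2.2 (dm F m) (u F p)]
    _ ≤ (|m|:ℤ) * L (dm F 1) + L (u F p) + (|(-m)|:ℤ) * L (dm F 1) := by
        linarith [len_dm hlen m, len_dm hlen (-m)]
    _ = 2 * |(m:ℝ)| * L (dm F 1) + L (u F p) := by
        push_cast [Int.cast_abs, abs_neg]; ring

theorem len_small [Fintype F] (c : F) :
    L (u F (C c)) ≤ Mconst L ∧ L (u F (C c * T 1)) ≤ Mconst L := by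
  have hnn : ∀ c : F, 0 ≤ L (u F (C c)) + L (u F (C c * T 1)) := fun c =>
    add_nonneg (hlen.2.1 _) (hlen.2.1 _)
  have hle : L (u F (C c)) + L (u F (C c * T 1)) ≤ Mconst L :=
    Finset.single_le_sum (fun c _ => hnn c) (Finset.mem_univ c)
  constructor <;> [linarith [hlen.2.1 (u F (C c * T 1))]; linarith [hlen.2.1 (u F (C c))]]

theorem len_single [Fintype F] (k : ℤ) (c : F) :
    L (u F (AddMonoidAlgebra.single k c)) ≤ (2 * |(k:ℝ)| + 2) * L (dm F 1) + Mconst L := by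
  have hd1 : 0 ≤ L (dm F 1) := hlen.2.1 _
  rw [LaurentPolynomial.single_eq_C_mul_T]
  rcases Int.even_or_odd k with ⟨m, hm⟩ | ⟨m, hm⟩
  · have hCT : (C c : F[T;T⁻¹]) * T k = T (2*m) * C c := by
      rw [hm, mul_comm, two_mul]
    rw [hCT]
    have habs : |m| ≤ |k| + 1 := by
      rw [hm]
      rcases abs_cases m with ⟨h1,h2⟩|⟨h1,h2⟩ <;> rcases abs_cases (m+m) with ⟨h3,h4⟩|⟨h3,h4⟩ <;> omega
    have habsR : |(m:ℝ)| ≤ |(k:ℝ)| + 1 := by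
      have := (@Int.cast_le ℝ _ _ _).mpr habs; push_cast at this; linarith
    calc L (u F (T (2*m) * C c)) ≤ 2 * |(m:ℝ)| * L (dm F 1) + L (u F (C c)) :=
          len_conj hlen m (C c)
      _ ≤ (2 * |(k:ℝ)| + 2) * L (dm F 1) + Mconst L := by
          have := mul_le_mul_of_nonneg_right habsR hd1
          linarith [(len_small hlen c).1]
  · have hCT : (C c : F[T;T⁻¹]) * T k = T (2*m) * (C c * T 1) := by
      rw [hm, LaurentPolynomial.T_add, ← mul_assoc, mul_comm (C c) (T (2*m)), mul_assoc]
    rw [hCT]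
    have habs : |m| ≤ |k| + 1 := by
      rw [hm]
      rcases abs_cases m with ⟨h1,h2⟩|⟨h1,h2⟩ <;> rcases abs_cases (2*m+1) with ⟨h3,h4⟩|⟨h3,h4⟩ <;> omega
    have habsR : |(m:ℝ)| ≤ |(k:ℝ)| + 1 := by
      have := (@Int.cast_le ℝ _ _ _).mpr habs; push_cast at this; linarith
    calc L (u F (T (2*m) * (C c * T 1))) ≤ 2 * |(m:ℝ)| * L (dm F 1) + L (u F (C c * T 1)) :=
          len_conj hlen m (C c * T 1)
      _ ≤ (2 * |(k:ℝ)| + 2) * L (dm F 1) + Mconst L := by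
          have := mul_le_mul_of_nonneg_right habsR hd1
          linarith [(len_small hlen c).2]

theorem len_sum {ι : Type*} (s : Finset ι) (g : ι → F[T;T⁻¹]) :
    L (u F (∑ k ∈ s, g k)) ≤ ∑ k ∈ s, L (u F (g k)) := by
  classical
  induction s using Finset.induction_on with
  | empty => simp [u_zero, hlen.1]
  | insert _ _ hx ih =>
    rename_i a s
    rw [Finset.sum_insert hx, Finset.sum_insert hx, ← u_mul]
    calc L (u F (g a) * u F (∑ k ∈ s, g k)) ≤ L (u F (g a)) + L (u F (∑ k ∈ s, g k)) :=
          hlen.2.2.2 _ _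
      _ ≤ _ := by linarith [ih]

end Length

/-! ### The finite subgroups -/

variable (F) in
noncomputable def pol (n : ℕ) (c : ↥(Finset.Icc (-(n:ℤ)) (n:ℤ)) → F) : F[T;T⁻¹] :=
  ∑ k : ↥(Finset.Icc (-(n:ℤ)) (n:ℤ)), AddMonoidAlgebra.single (k:ℤ) (c k)

theorem pol_apply (n : ℕ) (c : ↥(Finset.Icc (-(n:ℤ)) (n:ℤ)) → F)
    (k₀ : ↥(Finset.Icc (-(n:ℤ)) (n:ℤ))) : (pol F n c).coeff (k₀ : ℤ) = c k₀ := by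
  classical
  rw [pol, AddMonoidAlgebra.coeff_sum, Finsupp.finset_sum_apply]
  rw [Finset.sum_congr rfl (fun (k : ↥(Finset.Icc (-(n:ℤ)) (n:ℤ))) _ =>
    show (AddMonoidAlgebra.single (k:ℤ) (c k)).coeff (k₀:ℤ) = if k = k₀ then c k else 0 by
      rw [AddMonoidAlgebra.coeff_single, Finsupp.single_apply]
      exact if_congr Subtype.ext_iff.symm rfl rfl)]
  simp

theorem pol_zero (n : ℕ) : pol F n 0 = 0 := by simp [pol]

theorem pol_add (n : ℕ) (c c' : ↥(Finset.Icc (-(n:ℤ)) (n:ℤ)) → F) :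
    pol F n (c + c') = pol F n c + pol F n c' := by
  simp [pol, AddMonoidAlgebra.single_add, Finset.sum_add_distrib]

theorem pol_inj (n : ℕ) : Function.Injective (pol F n) := by
  intro c c' h
  funext k
  rw [← pol_apply n c k, ← pol_apply n c' k, h]

variable (F) in
noncomputable def w (n : ℕ) (c : ↥(Finset.Icc (-(n:ℤ)) (n:ℤ)) → F) : SL(2, F[T;T⁻¹]) :=
  u F (pol F n c)

theorem w_mul (n : ℕ) (c c' : ↥(Finset.Icc (-(n:ℤ)) (n:ℤ)) → F) :
    w F n c * w F n c' = w F n (c + c') := by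
  rw [w, w, w, u_mul, pol_add]

theorem w_zero (n : ℕ) : w F n 0 = 1 := by rw [w, pol_zero, u_zero]

theorem w_inj (n : ℕ) : Function.Injective (w F n) :=
  fun _ _ h => pol_inj n (u_inj h)

theorem w_inv (n : ℕ) (c : ↥(Finset.Icc (-(n:ℤ)) (n:ℤ)) → F) :
    (w F n c)⁻¹ = w F n (-c) := by
  symm
  apply eq_inv_of_mul_eq_one_left
  rw [w_mul, neg_add_cancel, w_zero]

theorem Icc_card (n : ℕ) : (Finset.Icc (-(n:ℤ)) (n:ℤ)).card = 2*n+1 := by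
  rw [Int.card_Icc]
  omega

theorem len_w [Fintype F] {L : SL(2, F[T;T⁻¹]) → ℝ} (hlen : Stmt16.IsLengthFun L)
    (n : ℕ) (c : ↥(Finset.Icc (-(n:ℤ)) (n:ℤ)) → F) :
    L (w F n c) ≤ (2*(n:ℝ)+1) * ((2*(n:ℝ)+2) * L (dm F 1) + Mconst L) := by
  have hd1 : 0 ≤ L (dm F 1) := hlen.2.1 _
  have h1 := len_sum hlen Finset.univ
    (fun k : ↥(Finset.Icc (-(n:ℤ)) (n:ℤ)) => AddMonoidAlgebra.single (k:ℤ) (c k))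
  have h2 : ∀ k : ↥(Finset.Icc (-(n:ℤ)) (n:ℤ)),
      L (u F (AddMonoidAlgebra.single (k:ℤ) (c k))) ≤ (2*(n:ℝ)+2) * L (dm F 1) + Mconst L := by
    intro k
    have hk := Finset.mem_Icc.mp k.2
    have habs : |((k:ℤ):ℝ)| ≤ (n:ℝ) := by
      rw [abs_le]
      constructor <;> [exact_mod_cast hk.1; exact_mod_cast hk.2]
    have := len_single hlen (k:ℤ) (c k)
    have hmul := mul_le_mul_of_nonneg_right habs hd1
    linarith
  calc L (w F n c) ≤ ∑ k : ↥(Finset.Icc (-(n:ℤ)) (n:ℤ)),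
        L (u F (AddMonoidAlgebra.single (k:ℤ) (c k))) := h1
    _ ≤ ∑ _k : ↥(Finset.Icc (-(n:ℤ)) (n:ℤ)), ((2*(n:ℝ)+2) * L (dm F 1) + Mconst L) :=
        Finset.sum_le_sum (fun k _ => h2 k)
    _ = (2*(n:ℝ)+1) * ((2*(n:ℝ)+2) * L (dm F 1) + Mconst L) := by
        rw [Finset.sum_const, Finset.card_univ, Fintype.card_coe, Icc_card, nsmul_eq_mul]
        push_cast
        ring

end Stmt16Aux


/-- **`SL₂(𝔽_q[X,X⁻¹])` does not have rapid decay.** For `F = 𝔽_q` a finite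
field, the group `Γ = SL₂(F[X,X⁻¹])` does not have property RD with respect to
any proper length function. -/
theorem statement16 (F : Type*) [Field F] [Fintype F]
    (L : SL(2, LaurentPolynomial F) → ℝ)
    (hlen : Stmt16.IsLengthFun L)
    (hproper : ∀ t : ℝ, {g : SL(2, LaurentPolynomial F) | L g ≤ t}.Finite) :
    ¬ Stmt16.HasRD L := by
  classical
  rintro ⟨P, hP⟩
  obtain ⟨Q, hQ⟩ := Stmt16Aux.exists_majorant P
  set Ld : ℝ := L (Stmt16Aux.dm F 1) with hLd
  set M : ℝ := Stmt16Aux.Mconst L with hMdef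
  have hd1 : 0 ≤ Ld := hlen.2.1 _
  have hM0 : 0 ≤ M := Finset.sum_nonneg fun c _ => add_nonneg (hlen.2.1 _) (hlen.2.1 _)
  set Bp : Polynomial ℝ :=
    (2 * Polynomial.X + 1) * ((2 * Polynomial.X + 2) * Polynomial.C Ld + Polynomial.C M) with hBp
  set Rp : Polynomial ℝ := Q.comp Bp with hRp
  set K : ℝ := (Fintype.card F : ℝ) with hKdef
  have hK : 2 ≤ K := by
    have h2c : 2 ≤ Fintype.card F := Fintype.one_lt_card
    rw [hKdef]
    exact_mod_cast h2c
  have hK0 : (0:ℝ) < K := by linarith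
  obtain ⟨n, hlt⟩ := Stmt16Aux.poly_lt_pow Rp hK
  set A : Finset (SL(2, LaurentPolynomial F)) := Finset.image (Stmt16Aux.w F n) Finset.univ with hA
  have hmemA : ∀ g, g ∈ A ↔ ∃ c, Stmt16Aux.w F n c = g := by
    intro g; simp [hA]
  have hne : A.Nonempty := ⟨Stmt16Aux.w F n 0, (hmemA _).mpr ⟨0, rfl⟩⟩
  have hsub : ∀ a ∈ A, ∀ g, a⁻¹ * g ∈ A ↔ g ∈ A := by
    intro a ha g
    obtain ⟨c, rfl⟩ := (hmemA a).mp ha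
    constructor
    · intro hg
      obtain ⟨e, he⟩ := (hmemA _).mp hg
      have hg2 : g = Stmt16Aux.w F n (c + e) := by
        rw [← Stmt16Aux.w_mul, he]
        group
      exact (hmemA g).mpr ⟨c + e, hg2.symm⟩
    · intro hg
      obtain ⟨e, rfl⟩ := (hmemA g).mp hg
      rw [Stmt16Aux.w_inv, Stmt16Aux.w_mul]
      exact (hmemA _).mpr ⟨-c + e, rfl⟩
  have hcard : A.card = Fintype.card F ^ (2*n+1) := by
    rw [hA, Finset.card_image_of_injective _ (Stmt16Aux.w_inj n), Finset.card_univ,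
      Fintype.card_fun, Fintype.card_coe, Stmt16Aux.Icc_card]
  set f := Stmt16Aux.finind A with hf
  have hconv := hP f
  have hcardle := Stmt16Aux.finind_card_le A hne hsub hconv
  set t := Stmt16.lenOf L f with ht
  have hset : {g | f g ≠ 0} = (A : Set (SL(2, LaurentPolynomial F))) := by
    ext g
    by_cases hg : g ∈ A <;> simp [hf, Stmt16Aux.finind_apply, hg]
  have hBval : Bp.eval (n:ℝ) = (2*(n:ℝ)+1) * ((2*(n:ℝ)+2) * Ld + M) := by
    simp [hBp]
  have hB0 : 0 ≤ Bp.eval (n:ℝ) := by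
    rw [hBval]
    have h1 : (0:ℝ) ≤ 2*(n:ℝ)+1 := by positivity
    have h2 : (0:ℝ) ≤ (2*(n:ℝ)+2) * Ld + M :=
      add_nonneg (mul_nonneg (by positivity) hd1) hM0
    exact mul_nonneg h1 h2
  have ht0 : 0 ≤ t := by
    rw [ht, Stmt16.lenOf]
    exact Real.sSup_nonneg (by rintro x ⟨g, _, rfl⟩; exact hlen.2.1 g)
  have htle : t ≤ Bp.eval (n:ℝ) := by
    rw [ht, Stmt16.lenOf]
    apply Real.sSup_le _ hB0
    rintro x ⟨g, hg, rfl⟩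
    rw [hset] at hg
    obtain ⟨c, rfl⟩ := (hmemA g).mp (Finset.mem_coe.mp hg)
    rw [hBval]
    exact Stmt16Aux.len_w hlen n c
  have hl2 : Stmt16.l2norm f = Real.sqrt A.card := Stmt16Aux.finind_l2norm A
  rw [hl2] at hcardle
  have hsq0 : (0:ℝ) ≤ (A.card:ℝ) := Nat.cast_nonneg _
  have hsqpos : 0 < Real.sqrt (A.card : ℝ) := Real.sqrt_pos.mpr (by exact_mod_cast hne.card_pos)
  have hsple : Real.sqrt (A.card : ℝ) ≤ P.eval t := by
    have h : Real.sqrt (A.card:ℝ) * Real.sqrt (A.card:ℝ) ≤ P.eval t * Real.sqrt (A.card:ℝ) :=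
      calc Real.sqrt (A.card:ℝ) * Real.sqrt (A.card:ℝ) = (A.card:ℝ) := Real.mul_self_sqrt hsq0
        _ ≤ _ := hcardle
    exact le_of_mul_le_mul_right h hsqpos
  have hPQ : P.eval t ≤ Q.eval (Bp.eval (n:ℝ)) := hQ t _ ht0 htle
  have hQR : Q.eval (Bp.eval (n:ℝ)) = Rp.eval (n:ℝ) := (Polynomial.eval_comp).symm
  have hKn : K ^ n ≤ Real.sqrt (A.card : ℝ) := by
    have hAK : (A.card : ℝ) = K ^ (2*n+1) := by
      rw [hcard, hKdef]; push_cast; ring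
    rw [hAK, Real.le_sqrt (pow_nonneg (le_of_lt hK0) n) (pow_nonneg (le_of_lt hK0) _)]
    calc (K^n)^2 = K^(2*n) := by rw [← pow_mul]; ring_nf
      _ ≤ K^(2*n+1) := pow_le_pow_right₀ (by linarith) (by omega)
  linarith
end
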